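/- Let X, Y be finite sets, n a positive integer, p_X a type with denominator n on X (i.e., n·p_X(x) ∈ ℤ for all x), and V : X → pmf(Y) a conditional pmf. Then there exists a conditional pmf V' : X → pmf(Y) such that n·p_X(x)·V'(y|x) ∈ ℤ for all (x,y) and |p_X(x)·V'(y|x) - p_X(x)·V(y|x)| ≤ 1/n for all (x,y) ∈ X × Y. -/

import Mathlib

/-- Rounding a nonnegative function to a `1/m`-grid, controlling the partial
sums via floors. -/
lemma round_aux {Y : Type*} (m : ℕ) (hm : 0 < m) (q : Y → ℝ) (hq : ∀ y, 0 ≤ q y)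
    (s : Finset Y) :
    ∃ q' : Y → ℝ, (∀ y, 0 ≤ q' y) ∧ (∀ y ∉ s, q' y = 0) ∧
      (∀ y, ∃ k : ℤ, (m : ℝ) * q' y = k) ∧
      (∑ y ∈ s, q' y) = (⌊(m : ℝ) * ∑ y ∈ s, q y⌋ : ℝ) / m ∧
      (∀ y ∈ s, |q' y - q y| ≤ 1 / m) := by
  classical
  have hm0 : (m : ℝ) ≠ 0 := by positivity
  induction s using Finset.induction_on with
  | empty =>
      refine ⟨fun _ => 0, fun _ => le_refl 0, fun _ _ => rfl, fun y => ⟨0, by simp⟩, ?_, ?_⟩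
      · simp
      · simp
  | @insert a s ha ih =>
      obtain ⟨q', hq0, hqz, hqint, hqsum, hqerr⟩ := ih
      set B : ℝ := (m : ℝ) * ∑ y ∈ s, q y with hB
      set A : ℝ := (m : ℝ) * ∑ y ∈ insert a s, q y with hA
      have hAB : A - B = (m : ℝ) * q a := by
        rw [hA, hB, Finset.sum_insert ha]; ring
      have hBA : B ≤ A := by
        have : 0 ≤ (m : ℝ) * q a := mul_nonneg (by positivity) (hq a)
        linarith [hAB]
      refine ⟨fun y => if y = a then ((⌊A⌋ - ⌊B⌋ : ℤ) : ℝ) / m else q' y, ?_, ?_, ?_, ?_, ?_⟩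
      · intro y
        by_cases h : y = a
        · simp only [h, if_pos rfl]
          have : (⌊B⌋ : ℝ) ≤ (⌊A⌋ : ℝ) := by exact_mod_cast Int.floor_le_floor hBA
          have h2 : (0 : ℝ) ≤ ((⌊A⌋ - ⌊B⌋ : ℤ) : ℝ) := by push_cast; linarith
          exact div_nonneg h2 (by positivity)
        · simpa [h] using hq0 y
      · intro y hy
        have h1 : y ≠ a := fun h => hy (h ▸ Finset.mem_insert_self a s)
        have h2 : y ∉ s := fun h => hy (Finset.mem_insert_of_mem h)
        simp [h1, hqz y h2]
      · intro y
        by_cases h : y = a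
        · exact ⟨⌊A⌋ - ⌊B⌋, by show (m : ℝ) * (if y = a then ((⌊A⌋ - ⌊B⌋ : ℤ) : ℝ) / m else q' y) = _; rw [if_pos h]; field_simp⟩
        · simpa [h] using hqint y
      · rw [Finset.sum_insert ha, if_pos rfl]
        have : ∑ y ∈ s, (if y = a then ((⌊A⌋ - ⌊B⌋ : ℤ) : ℝ) / m else q' y) = ∑ y ∈ s, q' y := by
          apply Finset.sum_congr rfl
          intro y hy
          have : y ≠ a := fun h => ha (h ▸ hy)
          simp [this]
        rw [this, hqsum]
        push_cast
        field_simp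
        ring
      · intro y hy
        rcases Finset.mem_insert.mp hy with h | h
        · subst h
          simp only [if_pos rfl, if_true]
          have h1 : (⌊A⌋ : ℝ) ≤ A := Int.floor_le A
          have h2 : A - 1 < ⌊A⌋ := Int.sub_one_lt_floor A
          have h3 : (⌊B⌋ : ℝ) ≤ B := Int.floor_le B
          have h4 : B - 1 < ⌊B⌋ := Int.sub_one_lt_floor B
          have key : |((⌊A⌋ - ⌊B⌋ : ℤ) : ℝ) - (m : ℝ) * q y| ≤ 1 := by
            rw [abs_le]
            push_cast
            constructor <;> nlinarith [hAB]
          have hmpos : (0 : ℝ) < m := by positivity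
          have : |((⌊A⌋ - ⌊B⌋ : ℤ) : ℝ) / m - q y| = |((⌊A⌋ - ⌊B⌋ : ℤ) : ℝ) - (m : ℝ) * q y| / m := by
            rw [← abs_of_pos hmpos, ← abs_div]
            congr 1
            field_simp
            rw [abs_of_pos hmpos]; ring
          rw [this]
          calc |((⌊A⌋ - ⌊B⌋ : ℤ) : ℝ) - (m : ℝ) * q y| / m ≤ 1 / m :=
                div_le_div_of_nonneg_right key hmpos.le
            _ = 1 / m := rfl
        · have h1 : y ≠ a := fun hya => ha (hya ▸ h)
          simpa [h1] using hqerr y h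

/-- Conditional type approximation (Lemma 4): given a type `p_X` with
denominator `n` on `X` and a conditional pmf `V : X → P(Y)`, there is a
conditional pmf `V'` with `n·p_X(x)·V'(y|x) ∈ ℤ` and
`|p_X(x)·V'(y|x) - p_X(x)·V(y|x)| ≤ 1/n` for all `(x,y)`. -/
theorem stmt9 {X Y : Type*} [Fintype X] [Fintype Y] (n : ℕ) (hn : 0 < n)
    (pX : X → ℝ) (hpX0 : ∀ x, 0 ≤ pX x) (hpX1 : ∑ x, pX x = 1)
    (hpXtype : ∀ x, ∃ k : ℤ, (n : ℝ) * pX x = k)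
    (V : X → Y → ℝ) (hV : ∀ x, (∀ y, 0 ≤ V x y) ∧ ∑ y, V x y = 1) :
    ∃ V' : X → Y → ℝ, (∀ x, (∀ y, 0 ≤ V' x y) ∧ ∑ y, V' x y = 1) ∧
      (∀ x y, ∃ k : ℤ, (n : ℝ) * (pX x * V' x y) = k) ∧
      (∀ x y, |pX x * V' x y - pX x * V x y| ≤ 1 / n) := by
  classical
  have key : ∀ x : X, ∃ W : Y → ℝ, ((∀ y, 0 ≤ W y) ∧ ∑ y, W y = 1) ∧
      (∀ y, ∃ k : ℤ, (n : ℝ) * (pX x * W y) = k) ∧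
      (∀ y, |pX x * W y - pX x * V x y| ≤ 1 / n) := by
    intro x
    by_cases hz : pX x = 0
    · exact ⟨V x, hV x, fun y => ⟨0, by simp [hz]⟩, fun y => by
        simp only [hz, zero_mul, sub_zero, abs_zero]
        positivity⟩
    · obtain ⟨k, hk⟩ := hpXtype x
      have hpos : 0 < pX x := lt_of_le_of_ne (hpX0 x) (Ne.symm hz)
      have hkpos : (0 : ℝ) < k := by
        rw [← hk]; positivity
      have hk1 : 1 ≤ k := by exact_mod_cast hkpos
      set m : ℕ := k.toNat with hm
      have hmk : (m : ℝ) = (k : ℝ) := by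
        rw [hm]; exact_mod_cast Int.toNat_of_nonneg (by omega)
      have hmpos : 0 < m := by omega
      obtain ⟨W, hW0, _, hWint, hWsum, hWerr⟩ :=
        round_aux m hmpos (V x) (hV x).1 Finset.univ
      have hsum1 : ∑ y, W y = 1 := by
        rw [hWsum, (hV x).2]
        rw [show ((m : ℝ) * 1) = (m : ℝ) by ring]
        rw [show ⌊(m : ℝ)⌋ = (m : ℤ) by exact_mod_cast Int.floor_natCast m]
        field_simp
        simp
      have hpxm : pX x = (m : ℝ) / n := by
        rw [hmk]
        field_simp
        linarith [hk]
      refine ⟨W, ⟨hW0, hsum1⟩, ?_, ?_⟩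
      · intro y
        obtain ⟨j, hj⟩ := hWint y
        refine ⟨j, ?_⟩
        rw [hpxm]
        have hn0 : (n : ℝ) ≠ 0 := by positivity
        field_simp
        rw [mul_comm] at hj
        linarith [hj]
      · intro y
        have := hWerr y (Finset.mem_univ y)
        rw [← mul_sub, abs_mul, abs_of_pos hpos, hpxm]
        calc (m : ℝ) / n * |W y - V x y| ≤ (m : ℝ) / n * (1 / m) := by
              apply mul_le_mul_of_nonneg_left this (by positivity)
          _ = 1 / n := by
              field_simp
  choose V' h1 h2 h3 using key
  exact ⟨V', h1, h2, h3⟩
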